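/- Let Z_1,…,Z_k ∈ ℝ^d satisfy the r*-spread condition around μ for some r* > 0, and let x ∈ ℝ^d with d̃ := ‖x − μ‖ ≥ 20·r*. Then there exists an MT(x, 0.95·d̃, Z)-feasible matrix X with Σ_{i=1}^k X_{1,b_i} ≥ 0.9·k; hence the optimal value of MT(x, 0.95·d̃, Z) is at least 0.9·k. -/

import Mathlib

noncomputable section

/-- The index type of the MT semidefinite program: a distinguished index `1` (`Sum.inl ()`),
indices `b i` for `i : Fin k` (`Sum.inr (Sum.inl i)`) and indices `v j` for `j : Fin D`
(`Sum.inr (Sum.inr j)`). -/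
abbrev MTIdx (k D : ℕ) := Unit ⊕ Fin k ⊕ Fin D

/-- The distinguished index `1`. -/
abbrev idx1 {k D : ℕ} : MTIdx k D := Sum.inl ()

/-- The index `b i`. -/
abbrev idxb {k D : ℕ} (i : Fin k) : MTIdx k D := Sum.inr (Sum.inl i)

/-- The index `v j`. -/
abbrev idxv {k D : ℕ} (j : Fin D) : MTIdx k D := Sum.inr (Sum.inr j)

/-- A real symmetric `(1+k+D) × (1+k+D)` matrix `X` is `MT(x, r, Z)`-feasible if it is positive
semidefinite, `X_{1,1} = 1`, `X_{1,b_i} = X_{b_i,b_i}`, `∑ j, X_{v_j,v_j} = 1` and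
`⟨v_{b_i}, Z_i − x⟩ ≥ X_{b_i,b_i}·r` for all `i`, where `v_{b_i} = (X_{b_i,v_1},…,X_{b_i,v_D})`. -/
def MTFeasible {k D : ℕ} (Z : Fin k → EuclideanSpace ℝ (Fin D))
    (x : EuclideanSpace ℝ (Fin D)) (r : ℝ)
    (X : Matrix (MTIdx k D) (MTIdx k D) ℝ) : Prop :=
  X.PosSemidef ∧
  X idx1 idx1 = 1 ∧
  (∀ i : Fin k, X idx1 (idxb i) = X (idxb i) (idxb i)) ∧
  (∑ j : Fin D, X (idxv j) (idxv j) = 1) ∧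
  (∀ i : Fin k, X (idxb i) (idxb i) * r ≤ ∑ j : Fin D, X (idxb i) (idxv j) * (Z i - x) j)

/-- The objective `∑ i, X_{1, b_i}` of the MT semidefinite program. -/
def MTobj {k D : ℕ} (X : Matrix (MTIdx k D) (MTIdx k D) ℝ) : ℝ :=
  ∑ i : Fin k, X idx1 (idxb i)

/-- The sum of diagonal entries `∑ i, X_{b_i, b_i}`. -/
def MTdiag {k D : ℕ} (X : Matrix (MTIdx k D) (MTIdx k D) ℝ) : ℝ :=
  ∑ i : Fin k, X (idxb i) (idxb i)

/-- The optimal value of `MT(x, r, Z)`: the supremum of `∑ i, X_{1,b_i}` over feasible `X`. -/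
def MTval {k D : ℕ} (Z : Fin k → EuclideanSpace ℝ (Fin D))
    (x : EuclideanSpace ℝ (Fin D)) (r : ℝ) : ℝ :=
  sSup {s : ℝ | ∃ X : Matrix (MTIdx k D) (MTIdx k D) ℝ, MTFeasible Z x r X ∧ s = MTobj X}

/-- `Z₁,…,Z_k` satisfy the `r`-spread condition around `μ`: along every unit direction `v`,
the number of indices with `⟨Z i − μ, v⟩ ≥ r` is at most `0.05·k`. -/
def SpreadCond {k D : ℕ} (Z : Fin k → EuclideanSpace ℝ (Fin D))
    (μ : EuclideanSpace ℝ (Fin D)) (r : ℝ) : Prop :=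
  ∀ v : EuclideanSpace ℝ (Fin D), ‖v‖ = 1 →
    (({i : Fin k | r ≤ (inner ℝ (Z i - μ) v : ℝ)}).ncard : ℝ) ≤ 0.05 * k

theorem stmt12 {k D : ℕ} (Z : Fin k → EuclideanSpace ℝ (Fin D))
    (μ : EuclideanSpace ℝ (Fin D)) (rstar : ℝ) (hrstar : 0 < rstar)
    (hspread : SpreadCond Z μ rstar)
    (x : EuclideanSpace ℝ (Fin D)) (hx : 20 * rstar ≤ ‖x - μ‖) :
    (∃ X : Matrix (MTIdx k D) (MTIdx k D) ℝ,
        MTFeasible Z x (0.95 * ‖x - μ‖) X ∧ (0.9 : ℝ) * k ≤ MTobj X) ∧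
      (0.9 : ℝ) * k ≤ MTval Z x (0.95 * ‖x - μ‖) := by
  set d : ℝ := ‖x - μ‖ with hdd
  have hd : 0 < d := lt_of_lt_of_le (by positivity) hx
  -- unit vector from x towards μ
  set u : EuclideanSpace ℝ (Fin D) := d⁻¹ • (μ - x) with hu
  have hnorm : ‖u‖ = 1 := by
    rw [hu, norm_smul, norm_inv, Real.norm_eq_abs, abs_of_pos hd]
    rw [show μ - x = -(x - μ) by abel, norm_neg, ← hdd]
    field_simp
  have husq : ∑ j, u j * u j = 1 := by
    have : ‖u‖ ^ 2 = ∑ j, u j * u j := by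
      rw [EuclideanSpace.norm_eq, Real.sq_sqrt (by positivity)]
      simp [sq]
    rw [← this, hnorm]; norm_num
  -- the inner product with direction u
  set S : Fin k → ℝ := fun i => ∑ j, u j * (Z i - x) j with hS
  set β : Fin k → ℝ := fun i => if 0.95 * d ≤ S i then 1 else 0 with hβ
  set y : MTIdx k D → ℝ := Sum.elim (fun _ => 1) (Sum.elim β (fun j => u j)) with hy
  set X : Matrix (MTIdx k D) (MTIdx k D) ℝ := Matrix.of (fun a b => y a * y b) with hX
  have hβsq : ∀ i, β i * β i = β i := by
    intro i; rw [hβ]; by_cases h : 0.95 * d ≤ S i <;> simp [h]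
  have hfeas : MTFeasible Z x (0.95 * d) X := by
    refine ⟨Matrix.posSemidef_iff_dotProduct_mulVec.mpr ⟨?_, ?_⟩, ?_, ?_, ?_, ?_⟩
    · ext a b; simp [hX, Matrix.conjTranspose, mul_comm]
    · intro w
      have key : dotProduct (star w) (X.mulVec w)
          = (∑ a, y a * w a) * (∑ a, y a * w a) := by
        simp only [hX, dotProduct, Matrix.mulVec, Matrix.of_apply, star_trivial]
        rw [Finset.sum_mul_sum]
        refine Finset.sum_congr rfl fun a _ => ?_
        rw [Finset.mul_sum]
        exact Finset.sum_congr rfl fun b _ => by ring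
      rw [key]; exact mul_self_nonneg _
    · simp [hX, hy]
    · intro i; simp [hX, hy, hβsq i]
    · simpa [hX, hy] using husq
    · intro i
      simp only [hX, hy, Matrix.of_apply, Sum.elim_inl, Sum.elim_inr, one_mul]
      rw [hβsq i]
      have : ∑ j, β i * u j * (Z i - x) j = β i * S i := by
        rw [hS, Finset.mul_sum]
        exact Finset.sum_congr rfl fun j _ => by ring
      rw [this]
      by_cases h : 0.95 * d ≤ S i
      · have : β i = 1 := by rw [hβ]; simp [h]
        rw [this]; simpa using h
      · have : β i = 0 := by rw [hβ]; simp [h]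
        rw [this]; simp
  -- counting
  have hobj : (0.9 : ℝ) * k ≤ MTobj X := by
    have hMTobj : MTobj X = ∑ i, β i := by
      unfold MTobj; simp [hX, hy]
    classical
    set T : Finset (Fin k) := Finset.univ.filter (fun i => 0.95 * d ≤ S i) with hT
    have hsum : ∑ i, β i = (T.card : ℝ) := by
      rw [hβ, Finset.sum_ite, Finset.sum_const, Finset.sum_const]
      simp [hT]
    -- complement is contained in spread set for v = -u
    have hSi : ∀ i, S i = (inner ℝ (Z i - μ) u : ℝ) + d := by
      intro i
      have h1 : (inner ℝ u (Z i - x) : ℝ) = S i := by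
        rw [hS]; simp [PiLp.inner_apply, RCLike.inner_apply, mul_comm]
      have h2 : (inner ℝ u (Z i - μ) : ℝ) + (inner ℝ u (μ - x) : ℝ) = (inner ℝ u (Z i - x) : ℝ) := by
        rw [← inner_add_right]; congr 1; abel
      have h3 : (inner ℝ u (μ - x) : ℝ) = d := by
        rw [hu, real_inner_smul_left, real_inner_self_eq_norm_sq]
        rw [show μ - x = -(x - μ) by abel, norm_neg, ← hdd]
        field_simp
      rw [← h1, ← h2, h3, real_inner_comm]
    have hsub : (Finset.univ.filter (fun i => ¬ (0.95 * d ≤ S i))) ⊆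
        Finset.univ.filter (fun i => rstar ≤ (inner ℝ (Z i - μ) (-u) : ℝ)) := by
      intro i hi
      simp only [Finset.mem_filter, Finset.mem_univ, true_and, not_le] at hi ⊢
      rw [inner_neg_right]
      have := hSi i
      have h5 : (inner ℝ (Z i - μ) u : ℝ) < -(0.05 * d) := by nlinarith [hSi i]
      have : rstar ≤ 0.05 * d := by nlinarith
      linarith
    have hcard : ((Finset.univ.filter (fun i => rstar ≤ (inner ℝ (Z i - μ) (-u) : ℝ))).card : ℝ)
        ≤ 0.05 * k := by
      have hsp := hspread (-u) (by rw [norm_neg, hnorm])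
      have : {i : Fin k | rstar ≤ (inner ℝ (Z i - μ) (-u) : ℝ)}.ncard
          = (Finset.univ.filter (fun i => rstar ≤ (inner ℝ (Z i - μ) (-u) : ℝ))).card := by
        rw [Set.ncard_eq_toFinset_card']
        congr 1
        ext i
        simp
      rw [this] at hsp
      exact hsp
    have hcompl : ((Finset.univ.filter (fun i => ¬ (0.95 * d ≤ S i))).card : ℝ) ≤ 0.05 * k :=
      le_trans (by exact_mod_cast Nat.cast_le.mpr (Finset.card_le_card hsub)) hcard
    have hsplit : T.card + (Finset.univ.filter (fun i => ¬ (0.95 * d ≤ S i))).card = k := by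
      rw [hT, Finset.card_filter_add_card_filter_not]
      simp
    have : (T.card : ℝ) ≥ 0.95 * k := by
      have := hsplit
      have h6 : (T.card : ℝ) + ((Finset.univ.filter (fun i => ¬ (0.95 * d ≤ S i))).card : ℝ)
          = (k : ℝ) := by exact_mod_cast this
      linarith
    rw [hMTobj, hsum]
    nlinarith [Nat.cast_nonneg (α := ℝ) k]
  refine ⟨⟨X, hfeas, hobj⟩, ?_⟩
  -- sSup bound
  have hbdd : BddAbove {s : ℝ | ∃ X : Matrix (MTIdx k D) (MTIdx k D) ℝ,
      MTFeasible Z x (0.95 * d) X ∧ s = MTobj X} := by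
    refine ⟨(k : ℝ), ?_⟩
    rintro s ⟨Y, ⟨hpsd, h11, h1b, -, -⟩, rfl⟩
    unfold MTobj
    calc ∑ i : Fin k, Y idx1 (idxb i) ≤ ∑ _i : Fin k, (1 : ℝ) := by
          apply Finset.sum_le_sum
          intro i _
          -- quadratic form on e_1 - e_{b i}
          classical
          set w : MTIdx k D → ℝ :=
            Pi.single idx1 1 - Pi.single (idxb i) 1 with hw
          have hq := hpsd.dotProduct_mulVec_nonneg w
          have hherm : Y (idxb i) idx1 = Y idx1 (idxb i) := by
            have := congrFun (congrFun hpsd.1 (idxb i)) idx1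
            simpa [Matrix.conjTranspose] using this.symm
          have hcalc : dotProduct (star w) (Y.mulVec w)
              = Y idx1 idx1 - Y idx1 (idxb i) - Y (idxb i) idx1 + Y (idxb i) (idxb i) := by
            rw [hw, star_trivial, Matrix.mulVec_sub, Matrix.mulVec_single, Matrix.mulVec_single,
              sub_dotProduct, single_dotProduct, single_dotProduct]
            simp only [Pi.sub_apply, MulOpposite.op_one, one_smul, Matrix.col_apply]
            ring
          rw [hcalc, h11, hherm, ← h1b i] at hq
          linarith
      _ = (k : ℝ) := by simp
  exact le_trans hobj (le_csSup hbdd ⟨X, hfeas, rfl⟩)
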